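/- Let n ≥ 3 and let X be a symmetric n×n matrix whose entries all lie in {0, −1, 1}. Then X is positive semidefinite if and only if X satisfies: (i) the triangle inequalities X_ij + X_ik + X_jk ≥ −1, −X_ij + X_ik − X_jk ≥ −1, X_ij − X_ik − X_jk ≥ −1, and −X_ij − X_ik + X_jk ≥ −1 for all 1 ≤ i < j < k ≤ n, and (ii) the pair inequalities X_ij ≤ X_ii and X_ij ≥ −X_ii for all i ≠ j. -/

import Mathlib

open Matrix

open scoped Classical in
noncomputable def auxS {n : ℕ} (X : Matrix (Fin n) (Fin n) ℝ) (i : Fin n) : Finset (Fin n) :=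
  Finset.univ.filter (fun j => X i j ≠ 0)

noncomputable def auxRep {n : ℕ} (X : Matrix (Fin n) (Fin n) ℝ) (i : Fin n) : Fin n :=
  if h : (auxS X i).Nonempty then (auxS X i).min' h else i

noncomputable def auxB {n : ℕ} (X : Matrix (Fin n) (Fin n) ℝ) : Matrix (Fin n) (Fin n) ℝ :=
  Matrix.of fun i j => if auxRep X j = i then X (auxRep X j) j else 0

lemma aux_sum_ite {n : ℕ} (r : Fin n → Fin n) (f : Fin n → ℝ) (j k : Fin n) :
    (∑ i, (if r j = i then f j else 0) * (if r k = i then f k else 0))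
      = if r j = r k then f j * f k else 0 := by
  rw [Finset.sum_eq_single (r j)]
  · simp [eq_comm]
  · intro b _ hb
    simp [Ne.symm hb]
  · simp

lemma aux_psd {n : ℕ} (X : Matrix (Fin n) (Fin n) ℝ)
    (hs : ∀ a b, X a b = X b a)
    (hternary : ∀ i j, X i j = 0 ∨ X i j = -1 ∨ X i j = 1)
    (hdiag : ∀ i, X i i = 0 ∨ X i i = 1)
    (hzero : ∀ i j, X i i = 0 → X i j = 0)
    (hone : ∀ i j, i ≠ j → X i j ≠ 0 → X i i = 1)
    (hmult : ∀ i j k, i ≠ j → i ≠ k → j ≠ k → X i j ≠ 0 → X i k ≠ 0 →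
      X j k = X i j * X i k) :
    X.PosSemidef := by
  classical
  -- direction lemma
  have hdir : ∀ j k m, X j k ≠ 0 → X j m ≠ 0 → X k m ≠ 0 := by
    intro j k m hjk hjm
    by_cases hjk' : j = k
    · subst hjk'; exact hjm
    by_cases hmj : m = j
    · subst hmj; rw [hs k m]; exact hjk
    by_cases hmk : m = k
    · subst hmk
      rw [hone m j (fun h => hjk' h.symm) (by rw [hs m j]; exact hjk)]
      norm_num
    · have h := hmult j k m hjk' (fun h => hmj h.symm) (fun h => hmk h.symm) hjk hjm
      rw [h]
      exact mul_ne_zero hjk hjm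
  have hSeq : ∀ j k, X j k ≠ 0 → auxS X j = auxS X k := by
    intro j k h
    have h' : X k j ≠ 0 := by rw [hs k j]; exact h
    ext m
    simp only [auxS, Finset.mem_filter, Finset.mem_univ, true_and]
    exact ⟨fun hm => hdir j k m h hm, fun hm => hdir k j m h' hm⟩
  have hrepeq : ∀ j k, X j k ≠ 0 → auxRep X j = auxRep X k := by
    intro j k h
    have hS := hSeq j k h
    have hne : (auxS X k).Nonempty := ⟨j, by
      simp only [auxS, Finset.mem_filter, Finset.mem_univ, true_and]
      rw [hs k j]; exact h⟩
    simp only [auxRep, hS, dif_pos hne]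
  have hmem : ∀ i, X i i ≠ 0 → X (auxRep X i) i ≠ 0 := by
    intro i hi
    have hne : (auxS X i).Nonempty := ⟨i, by simp [auxS, hi]⟩
    have hmem : auxRep X i ∈ auxS X i := by
      simp only [auxRep, dif_pos hne]
      exact Finset.min'_mem _ hne
    simp only [auxS, Finset.mem_filter, Finset.mem_univ, true_and] at hmem
    rw [hs]; exact hmem
  have hjj1 : ∀ j k, X j k ≠ 0 → X j j = 1 := by
    intro j k h
    by_cases hjk : j = k
    · subst hjk
      rcases hdiag j with h0 | h1
      · exact absurd h0 h
      · exact h1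
    · exact hone j k hjk h
  have key : X = (auxB X)ᴴ * (auxB X) := by
    ext j k
    rw [Matrix.mul_apply]
    simp only [conjTranspose_apply, auxB, of_apply, star_trivial]
    rw [aux_sum_ite (auxRep X) (fun i => X (auxRep X i) i) j k]
    by_cases h : X j k = 0
    · by_cases hr : auxRep X j = auxRep X k
      · rw [if_pos hr]
        -- show one of the factors is zero
        by_cases hrj : X (auxRep X j) j = 0
        · rw [hrj, h, zero_mul]
        by_cases hrk : X (auxRep X k) k = 0
        · rw [hrk, h, mul_zero]
        exfalso
        set r := auxRep X j with hrdef
        have hrk' : X r k ≠ 0 := by rw [hr]; exact hrk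
        by_cases h1 : r = j
        · exact hrk' (h1 ▸ h)
        by_cases h2 : r = k
        · apply hrj
          rw [h2, hs k j]
          exact h
        by_cases h3 : j = k
        · apply hrj
          rw [hs]
          apply hzero
          rw [h3] at h ⊢
          exact h
        · have hm := hmult r j k h1 h2 h3 hrj hrk'
          rw [h] at hm
          exact (mul_ne_zero hrj hrk') hm.symm
      · rw [if_neg hr]; exact h
    · have hr : auxRep X j = auxRep X k := hrepeq j k h
      rw [if_pos hr]
      set r := auxRep X j with hrdef
      have hjj : X j j = 1 := hjj1 j k h
      have hkk : X k k = 1 := hjj1 k j (by rw [hs k j]; exact h)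
      have hrj : X r j ≠ 0 := hmem j (by rw [hjj]; norm_num)
      have hrk : X r k ≠ 0 := by
        have := hmem k (by rw [hkk]; norm_num)
        rw [hr]; exact this
      rw [← hr]
      by_cases h1 : r = j
      · rw [h1, hjj, one_mul]
      by_cases h2 : r = k
      · rw [h2, hkk, mul_one, hs k j]
      by_cases h3 : j = k
      · subst h3
        rw [hjj]
        rcases hternary r j with h4 | h4 | h4
        · exact absurd h4 hrj
        · rw [h4]; norm_num
        · rw [h4]; norm_num
      · exact hmult r j k h1 h2 h3 hrj hrk
  rw [key]
  exact posSemidef_conjTranspose_mul_self (auxB X)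

set_option maxHeartbeats 1000000 in
theorem stmt_3 (n : ℕ) (hn : 3 ≤ n) (X : Matrix (Fin n) (Fin n) ℝ)
    (hsymm : X.IsSymm)
    (hternary : ∀ i j, X i j = 0 ∨ X i j = -1 ∨ X i j = 1) :
    X.PosSemidef ↔
      ((∀ i j k : Fin n, i < j → j < k →
          -1 ≤ X i j + X i k + X j k ∧
          -1 ≤ -X i j + X i k - X j k ∧
          -1 ≤ X i j - X i k - X j k ∧
          -1 ≤ -X i j - X i k + X j k) ∧
       (∀ i j : Fin n, i ≠ j → X i j ≤ X i i ∧ -X i i ≤ X i j)) := by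
  have hs : ∀ a b, X a b = X b a := fun a b => hsymm.apply b a
  constructor
  · intro hX
    have hq3 : ∀ (i j k : Fin n) (a b c : ℝ),
        0 ≤ a * a * X i i + b * b * X j j + c * c * X k k
          + a * b * X i j + b * a * X j i + a * c * X i k + c * a * X k i
          + b * c * X j k + c * b * X k j := by
      intro i j k a b c
      have := hX.dotProduct_mulVec_nonneg (Pi.single i a + Pi.single j b + Pi.single k c)
      simp only [star_trivial] at this
      by_cases hij : i = j
      · subst hij
        by_cases hik : i = k
        · subst hik
          simp [dotProduct, mulVec, Pi.single_apply, Finset.mul_sum, mul_ite, ite_mul,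
            add_mul, mul_add, Finset.sum_add_distrib, Finset.sum_ite_eq,
            Finset.sum_ite_eq'] at this
          nlinarith [this]
        · simp [dotProduct, mulVec, Pi.single_apply, Finset.mul_sum, mul_ite, ite_mul,
            add_mul, mul_add, Finset.sum_add_distrib, Finset.sum_ite_eq,
            Finset.sum_ite_eq', hik, Ne.symm hik] at this
          nlinarith [this]
      · by_cases hik : i = k
        · subst hik
          simp [dotProduct, mulVec, Pi.single_apply, Finset.mul_sum, mul_ite, ite_mul,
            add_mul, mul_add, Finset.sum_add_distrib, Finset.sum_ite_eq,
            Finset.sum_ite_eq', hij, Ne.symm hij] at this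
          nlinarith [this]
        · by_cases hjk : j = k
          · subst hjk
            simp [dotProduct, mulVec, Pi.single_apply, Finset.mul_sum, mul_ite, ite_mul,
              add_mul, mul_add, Finset.sum_add_distrib, Finset.sum_ite_eq,
              Finset.sum_ite_eq', hij, Ne.symm hij, hik, Ne.symm hik] at this
            nlinarith [this]
          · simp [dotProduct, mulVec, Pi.single_apply, Finset.mul_sum, mul_ite, ite_mul,
              add_mul, mul_add, Finset.sum_add_distrib, Finset.sum_ite_eq,
              Finset.sum_ite_eq', hij, Ne.symm hij, hik, Ne.symm hik, hjk,
              Ne.symm hjk] at this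
            nlinarith [this]
    constructor
    · intro i j k hij hjk
      have hd1 : X i i ≤ 1 := by rcases hternary i i with h | h | h <;> linarith
      have hd2 : X j j ≤ 1 := by rcases hternary j j with h | h | h <;> linarith
      have hd3 : X k k ≤ 1 := by rcases hternary k k with h | h | h <;> linarith
      have e1 : X j i = X i j := hs j i
      have e2 : X k i = X i k := hs k i
      have e3 : X k j = X j k := hs k j
      have q1 := hq3 i j k 1 1 1
      have q2 := hq3 i j k 1 (-1) 1
      have q3 := hq3 i j k 1 1 (-1)
      have q4 := hq3 i j k 1 (-1) (-1)
      clear hq3 hX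
      rcases hternary i j with h1 | h1 | h1 <;> rcases hternary i k with h2 | h2 | h2 <;>
        rcases hternary j k with h3 | h3 | h3 <;>
        exact ⟨by linarith, by linarith, by linarith, by linarith⟩
    · intro i j hij
      have hd : X j j ≤ 1 := by rcases hternary j j with h | h | h <;> linarith
      have e : X j i = X i j := hs j i
      have q1 := hq3 i j j 1 0 0
      have q2 := hq3 i j j 1 1 0
      have q3 := hq3 i j j (-1) 1 0
      clear hq3 hX
      rcases hternary i i with h | h | h <;> rcases hternary i j with h' | h' | h' <;>
        exact ⟨by linarith, by linarith⟩
  · rintro ⟨h1, h2⟩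
    -- derive structural facts
    have hex : ∀ i : Fin n, ∃ j, j ≠ i := by
      intro i
      apply Fintype.exists_ne_of_one_lt_card
      simp only [Fintype.card_fin]
      omega
    have hdiag : ∀ i, X i i = 0 ∨ X i i = 1 := by
      intro i
      obtain ⟨j, hj⟩ := hex i
      obtain ⟨ha, hb⟩ := h2 i j (Ne.symm hj)
      rcases hternary i i with h | h | h
      · exact Or.inl h
      · exfalso
        rcases hternary i j with h' | h' | h' <;> linarith
      · exact Or.inr h
    have hzero : ∀ i j, X i i = 0 → X i j = 0 := by
      intro i j h0
      by_cases hij : i = j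
      · rw [← hij]; exact h0
      · obtain ⟨ha, hb⟩ := h2 i j hij
        linarith
    have hone : ∀ i j, i ≠ j → X i j ≠ 0 → X i i = 1 := by
      intro i j hij hne
      obtain ⟨ha, hb⟩ := h2 i j hij
      rcases hdiag i with h | h
      · exact absurd (hzero i j h) hne
      · exact h
    have htri' : ∀ i j k : Fin n, i ≠ j → i ≠ k → j ≠ k →
        -1 ≤ X i j + X i k + X j k ∧ -1 ≤ -X i j + X i k - X j k ∧
        -1 ≤ X i j - X i k - X j k ∧ -1 ≤ -X i j - X i k + X j k := by
      intro i j k hij hik hjk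
      have e1 : X j i = X i j := hs j i
      have e2 : X k i = X i k := hs k i
      have e3 : X k j = X j k := hs k j
      rcases hij.lt_or_gt with a1 | a1 <;> rcases hik.lt_or_gt with a2 | a2 <;>
        rcases hjk.lt_or_gt with a3 | a3
      · obtain ⟨t1, t2, t3, t4⟩ := h1 i j k a1 a3
        exact ⟨by linarith, by linarith, by linarith, by linarith⟩
      · obtain ⟨t1, t2, t3, t4⟩ := h1 i k j a2 a3
        exact ⟨by linarith, by linarith, by linarith, by linarith⟩
      · exact absurd (a1.trans a3) (lt_asymm a2)
      · obtain ⟨t1, t2, t3, t4⟩ := h1 k i j a2 a1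
        exact ⟨by linarith, by linarith, by linarith, by linarith⟩
      · obtain ⟨t1, t2, t3, t4⟩ := h1 j i k a1 a2
        exact ⟨by linarith, by linarith, by linarith, by linarith⟩
      · exact absurd (a3.trans a1) (lt_asymm a2)
      · obtain ⟨t1, t2, t3, t4⟩ := h1 j k i a3 a2
        exact ⟨by linarith, by linarith, by linarith, by linarith⟩
      · obtain ⟨t1, t2, t3, t4⟩ := h1 k j i a3 a1
        exact ⟨by linarith, by linarith, by linarith, by linarith⟩
    have hmult : ∀ i j k : Fin n, i ≠ j → i ≠ k → j ≠ k → X i j ≠ 0 → X i k ≠ 0 →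
        X j k = X i j * X i k := by
      intro i j k hij hik hjk ha hb
      obtain ⟨t1, t2, t3, t4⟩ := htri' i j k hij hik hjk
      rcases hternary i j with h | h | h <;> rcases hternary i k with h' | h' | h' <;>
        rcases hternary j k with h'' | h'' | h'' <;>
        first
          | exact absurd h ha
          | exact absurd h' hb
          | (rw [h, h', h'']; norm_num; done)
          | (exfalso; linarith)
    exact aux_psd X hs hternary hdiag hzero hone hmult
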